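/- If G is a disjoint union of m cliques on n vertices, then for every b > 1 there is an embedding f of the vertex set of G into R^{n-1} such that dist(f(u), f(v)) = 1 when uv is an edge of G and dist(f(u), f(v)) = b when uv is a non-edge (u ≠ v). -/

import Mathlib

open Polynomial Matrix

noncomputable section

/-- The Borsuk number of a bounded set `S`: the least `k` such that `S` can be covered
by `k` subsets each of diameter strictly smaller than the diameter of `S`. -/
def borsukNumber {d : ℕ} (S : Set (EuclideanSpace ℝ (Fin d))) : ℕ :=
  sInf {k | ∃ c : Fin k → Set (EuclideanSpace ℝ (Fin d)),
    (∀ i, c i ⊆ S ∧ Metric.diam (c i) < Metric.diam S) ∧ S ⊆ ⋃ i, c i}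

/-- The clique covering number `θ(G)`: the least number of cliques covering all vertices. -/
def cliqueCoverNumber {V : Type*} (G : SimpleGraph V) : ℕ :=
  sInf {k | ∃ c : Fin k → Set V, (∀ i, G.IsClique (c i)) ∧ (⋃ i, c i) = Set.univ}

/-- The bordered matrix `A_G(t)`: first row and column `(0,1,…,1)`, zero diagonal,
entry `1` at edges of `G` and `t` at non-edges. The `none` index is the border. -/
def graphMat {n : ℕ} (G : SimpleGraph (Fin n)) [DecidableRel G.Adj]
    {R : Type*} [CommRing R] (t : R) : Matrix (Option (Fin n)) (Option (Fin n)) R :=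
  fun i j => match i, j with
  | none, none => 0
  | none, some _ => 1
  | some _, none => 1
  | some i, some j => if i = j then 0 else if G.Adj i j then 1 else t

/-- `C_G(t) = det A_G(t)` as a polynomial in `t`. -/
def graphPoly {n : ℕ} (G : SimpleGraph (Fin n)) [DecidableRel G.Adj] : Polynomial ℝ :=
  (graphMat G (Polynomial.X : Polynomial ℝ)).det

/-- `τ₁(G)`: the smallest root `t > 1` of `C_G`. -/
def tau1 {n : ℕ} (G : SimpleGraph (Fin n)) [DecidableRel G.Adj] : ℝ :=
  sInf {t : ℝ | 1 < t ∧ (graphPoly G).IsRoot t}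

open scoped Classical in
/-- `μ(G)`: the multiplicity of the smallest root `t > 1` of `C_G`, or `0` if none exists. -/
def mu {n : ℕ} (G : SimpleGraph (Fin n)) [DecidableRel G.Adj] : ℕ :=
  if (∃ t : ℝ, 1 < t ∧ (graphPoly G).IsRoot t) then
    (graphPoly G).rootMultiplicity (tau1 G) else 0

/-- `f` realizes `G` in Euclidean space as a two-distance set: distance `1` on edges
and distance `b` on non-edges. -/
def IsRealization {n d : ℕ} (G : SimpleGraph (Fin n)) (b : ℝ)
    (f : Fin n → EuclideanSpace ℝ (Fin d)) : Prop :=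
  (∀ i j, G.Adj i j → dist (f i) (f j) = 1) ∧
  (∀ i j, i ≠ j → ¬ G.Adj i j → dist (f i) (f j) = b)

/-- The Cayley–Menger matrix of a tuple of points (the `none` index is the border). -/
def cmMat {n d : ℕ} (p : Fin n → EuclideanSpace ℝ (Fin d)) :
    Matrix (Option (Fin n)) (Option (Fin n)) ℝ :=
  fun i j => match i, j with
  | none, none => 0
  | none, some _ => 1
  | some _, none => 1
  | some i, some j => dist (p i) (p j) ^ 2

/-- `G` is a disjoint union of cliques (adjacency is transitive). -/
def IsUnionOfCliques {V : Type*} (G : SimpleGraph V) : Prop :=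
  ∀ u v w, G.Adj u v → G.Adj v w → u ≠ w → G.Adj u w

/-- `G` is complete multipartite (non-adjacency is transitive). -/
def IsCompleteMultipartite {V : Type*} (G : SimpleGraph V) : Prop :=
  ∀ u v w, ¬ G.Adj u v → ¬ G.Adj v w → ¬ G.Adj u w

/-- The clique number `ω(G)`. -/
def cliqueNumber {V : Type*} (G : SimpleGraph V) : ℕ :=
  sSup {k | ∃ s : Finset V, G.IsNClique k s}


/-- zero-extension from `Fin d` to `Fin k` coordinates. -/
def extFun (d k : ℕ) (x : EuclideanSpace ℝ (Fin d)) : EuclideanSpace ℝ (Fin k) :=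
  WithLp.toLp 2 (fun j => if h : (j : ℕ) < d then x ⟨j, h⟩ else 0)

lemma extFun_dist {d k : ℕ} (hdk : d ≤ k) (x y : EuclideanSpace ℝ (Fin d)) :
    dist (extFun d k x) (extFun d k y) = dist x y := by
  rw [EuclideanSpace.dist_eq, EuclideanSpace.dist_eq]
  congr 1
  have h1 : ∀ j : Fin k, dist (extFun d k x j) (extFun d k y j) ^ 2 =
      (fun t : ℕ => if ht : t < d then dist (x ⟨t, ht⟩) (y ⟨t, ht⟩) ^ 2 else 0) (j : ℕ) := by
    intro j
    by_cases h : (j : ℕ) < d <;> simp [extFun, h]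
  rw [Finset.sum_congr rfl (fun j _ => h1 j),
    Fin.sum_univ_eq_sum_range (fun t : ℕ => if ht : t < d then dist (x ⟨t, ht⟩) (y ⟨t, ht⟩) ^ 2 else 0) k,
    ← Finset.sum_subset (Finset.range_subset_range.2 hdk) (by intro t _ ht; simp at ht; simp [ht]),
    ← Fin.sum_univ_eq_sum_range]
  apply Finset.sum_congr rfl
  intro i _
  simp [i.isLt]

lemma proj_lemma {ι : Type*} [Fintype ι] {k : ℕ} (f₀ : Fin (k + 1) → EuclideanSpace ℝ ι) :
    ∃ f : Fin (k + 1) → EuclideanSpace ℝ (Fin k),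
      ∀ i j, dist (f i) (f j) = dist (f₀ i) (f₀ j) := by
  classical
  set S : Submodule ℝ (EuclideanSpace ℝ ι) :=
    Submodule.span ℝ (Set.range fun i : Fin k => f₀ i.succ - f₀ 0) with hS
  have hmem : ∀ j, f₀ j - f₀ 0 ∈ S := by
    intro j
    induction j using Fin.cases with
    | zero => simp
    | succ i => exact Submodule.subset_span ⟨i, rfl⟩
  have hd : Module.finrank ℝ S ≤ k := by
    simpa [Set.finrank] using finrank_range_le_card (R := ℝ) (fun i : Fin k => f₀ i.succ - f₀ 0)
  let B := stdOrthonormalBasis ℝ S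
  let p : Fin (k + 1) → S := fun j => ⟨f₀ j - f₀ 0, hmem j⟩
  refine ⟨fun j => extFun _ k (B.repr (p j)), fun i j => ?_⟩
  rw [extFun_dist hd, B.repr.dist_map, Subtype.dist_eq]
  exact dist_sub_right _ _ _

lemma sum_pair_sq {ι : Type*} [Fintype ι] [DecidableEq ι] (i j : ι) (a : ℝ) :
    ∑ t, ((if t = i then a else 0) - (if t = j then a else 0)) ^ 2 =
      if i = j then 0 else 2 * a ^ 2 := by
  rcases eq_or_ne i j with h | h
  · simp [h]
  · rw [if_neg h]
    have h1 : ∀ t : ι, ((if t = i then a else 0) - (if t = j then a else 0)) ^ 2 =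
        (if t = i then a ^ 2 else 0) + (if t = j then a ^ 2 else 0) := by
      intro t
      by_cases hi : t = i <;> by_cases hj : t = j
      · exact absurd (hi ▸ hj) h
      all_goals simp [hi, hj, h, h.symm]
    rw [Finset.sum_congr rfl (fun t _ => h1 t), Finset.sum_add_distrib,
      Finset.sum_ite_eq' Finset.univ i, Finset.sum_ite_eq' Finset.univ j]
    simp; ring

lemma dist_construct {ι κ : Type*} [Fintype ι] [Fintype κ] [DecidableEq ι] [DecidableEq κ]
    (x y : EuclideanSpace ℝ (ι ⊕ κ)) (i j : ι) (pi pj : κ) (a c : ℝ)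
    (hx1 : ∀ t, x (Sum.inl t) = if t = i then a else 0)
    (hx2 : ∀ t, x (Sum.inr t) = if t = pi then c else 0)
    (hy1 : ∀ t, y (Sum.inl t) = if t = j then a else 0)
    (hy2 : ∀ t, y (Sum.inr t) = if t = pj then c else 0) :
    dist x y =
      Real.sqrt ((if i = j then 0 else 2 * a ^ 2) + (if pi = pj then 0 else 2 * c ^ 2)) := by
  rw [EuclideanSpace.dist_eq]
  congr 1
  rw [Fintype.sum_sum_type, ← sum_pair_sq i j a, ← sum_pair_sq pi pj c]
  congr 1
  · exact Finset.sum_congr rfl (fun t _ => by rw [Real.dist_eq, sq_abs, hx1, hy1])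
  · exact Finset.sum_congr rfl (fun t _ => by rw [Real.dist_eq, sq_abs, hx2, hy2])

theorem stmt6 {n m : ℕ} (G : SimpleGraph (Fin n)) (P : Fin n → Fin m)
    (hP : ∀ u v, G.Adj u v ↔ u ≠ v ∧ P u = P v) :
    ∀ b : ℝ, 1 < b →
      ∃ f : Fin n → EuclideanSpace ℝ (Fin (n - 1)), IsRealization G b f := by
  intro b hb
  rcases eq_or_ne n 0 with h0 | h0
  · subst h0
    exact ⟨Fin.elim0, fun i => i.elim0, fun i => i.elim0⟩
  obtain ⟨k, rfl⟩ := Nat.exists_eq_succ_of_ne_zero h0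
  set a : ℝ := Real.sqrt (1 / 2) with ha
  set c : ℝ := Real.sqrt ((b ^ 2 - 1) / 2) with hc
  have h2a : 2 * a ^ 2 = 1 := by
    rw [ha, Real.sq_sqrt (by norm_num : (0:ℝ) ≤ 1 / 2)]; ring
  have h2c : 2 * c ^ 2 = b ^ 2 - 1 := by
    rw [hc, Real.sq_sqrt (by nlinarith : (0:ℝ) ≤ (b ^ 2 - 1) / 2)]; ring
  let f₀ : Fin (k + 1) → EuclideanSpace ℝ (Fin (k + 1) ⊕ Fin m) := fun i =>
    WithLp.toLp 2 (Sum.elim (fun t => if t = i then a else 0) (fun t => if t = P i then c else 0))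
  have hdist : ∀ i j, dist (f₀ i) (f₀ j) =
      Real.sqrt ((if i = j then 0 else 2 * a ^ 2) +
        (if P i = P j then 0 else 2 * c ^ 2)) := fun i j =>
    dist_construct (f₀ i) (f₀ j) i j (P i) (P j) a c
      (fun t => rfl) (fun t => rfl) (fun t => rfl) (fun t => rfl)
  obtain ⟨f, hf⟩ := proj_lemma f₀
  refine ⟨f, fun i j hadj => ?_, fun i j hij hnadj => ?_⟩
  · obtain ⟨hij, hPij⟩ := (hP i j).1 hadj
    rw [hf, hdist, if_neg hij, if_pos hPij, add_zero, h2a, Real.sqrt_one]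
  · have hPij : P i ≠ P j := fun h => hnadj ((hP i j).2 ⟨hij, h⟩)
    rw [hf, hdist, if_neg hij, if_neg hPij, h2a, h2c,
      show (1 : ℝ) + (b ^ 2 - 1) = b ^ 2 by ring]
    exact Real.sqrt_sq (by linarith)
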